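/- Let μ(t) = 2 cot t + ε · β(t) on (0, t_c] where β(t) = cot t, t_c = min{π/4, T/2}, and ε > 0. Then the quantity Z_μ(t) := (3/2)μ(t)² + 2μ'(t) − 6cot²t + 4/sin²t equals (ε/(2sin²t))·[(3ε+12)cos²t − 4] and is strictly positive for all t ∈ (0, t_c]. -/

import Mathlib

open Real

/-- For `μ(t) = 2 cot t + ε cot t` on `(0, t_c]` with `t_c = min{π/4, T/2}`
and `ε > 0`, the quantity `Z_μ(t) = (3/2)μ² + 2μ' − 6cot²t + 4/sin²t`
equals `(ε/(2sin²t))·((3ε+12)cos²t − 4)` and is strictly positive on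
`(0, t_c]`. -/
theorem stmt3 (T ε : ℝ) (hT : 0 < T) (hε : 0 < ε)
    (tc : ℝ) (htc : tc = min (π / 4) (T / 2))
    (μ Z : ℝ → ℝ)
    (hμ : μ = fun t => 2 * Real.cos t / Real.sin t
      + ε * (Real.cos t / Real.sin t))
    (hZ : Z = fun t => (3 / 2) * μ t ^ 2 + 2 * deriv μ t
      - 6 * (Real.cos t / Real.sin t) ^ 2 + 4 / Real.sin t ^ 2)
    (t : ℝ) (ht : t ∈ Set.Ioc 0 tc) :
    Z t = ε / (2 * Real.sin t ^ 2) * ((3 * ε + 12) * Real.cos t ^ 2 - 4) ∧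
    0 < Z t := by
  obtain ⟨ht0, htle⟩ := ht
  have htc4 : t ≤ π / 4 := htle.trans (htc ▸ min_le_left _ _)
  have htpi : t < π := lt_of_le_of_lt htc4 (by linarith [pi_pos])
  have hsin : 0 < Real.sin t := Real.sin_pos_of_pos_of_lt_pi ht0 htpi
  have hsinne : Real.sin t ≠ 0 := ne_of_gt hsin
  have hcos : Real.sqrt 2 / 2 ≤ Real.cos t := by
    rw [← Real.cos_pi_div_four]
    exact Real.cos_le_cos_of_nonneg_of_le_pi ht0.le (by linarith [pi_pos]) htc4
  have hcos2 : 1 / 2 ≤ Real.cos t ^ 2 := by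
    nlinarith [Real.sq_sqrt (by norm_num : (2:ℝ) ≥ 0), Real.sqrt_nonneg 2]
  -- derivative of μ
  have hder : deriv μ t = (2 + ε) * (-(1 / Real.sin t ^ 2)) := by
    have h1 : HasDerivAt (fun t => Real.cos t / Real.sin t)
        ((-Real.sin t * Real.sin t - Real.cos t * Real.cos t) / Real.sin t ^ 2) t :=
      (Real.hasDerivAt_cos t).div (Real.hasDerivAt_sin t) hsinne
    have h2 : HasDerivAt μ ((2 + ε) * ((-Real.sin t * Real.sin t - Real.cos t * Real.cos t) / Real.sin t ^ 2)) t := by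
      rw [hμ]
      have := (h1.const_mul 2).add (h1.const_mul ε)
      convert this using 1
      · rfl
      · rfl
      · ext x; simp only [Pi.add_apply]; ring
      · ring
    rw [h2.deriv]
    have hpy := Real.sin_sq_add_cos_sq t
    field_simp
    nlinarith [hpy]
  have hs2 : Real.sin t ^ 2 = 1 - Real.cos t ^ 2 := by
    nlinarith [Real.sin_sq_add_cos_sq t]
  have hs2pos : 0 < Real.sin t ^ 2 := by positivity
  have hZeq : Z t = ε / (2 * Real.sin t ^ 2) * ((3 * ε + 12) * Real.cos t ^ 2 - 4) := by
    rw [hZ]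
    simp only
    rw [hder, hμ]
    simp only
    field_simp
    ring
  refine ⟨hZeq, ?_⟩
  rw [hZeq]
  have : 0 < (3 * ε + 12) * Real.cos t ^ 2 - 4 := by nlinarith
  positivity
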